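/- (Inequality (neri.5)) Let ν ∈ ℝ with 0 < ν ≤ 1/120, let s > 0 and e₁ ∈ ℝ. Define the set E := { x + iy − u·e^{−iν} : x ∈ [e₁ − s/4, e₁ + s/4], y ∈ [−(sin ν / 2)·s, (sin ν / 2)·s], u ∈ [0,∞) } ⊆ ℂ. Then for every z ∈ E with z ≠ e₁ and every r ∈ {0} ∪ [s, ∞): sin ν · |z − e₁| ≤ | z − r·e^{−iν} − e₁ |. -/

import Mathlib

noncomputable section

/-- The region `E = [e₁−s/4, e₁+s/4] + i[−(sin ν/2)s, (sin ν/2)s] − e^{−iν}[0,∞)`. -/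
def regionE (ν s e1 : ℝ) : Set ℂ :=
  {w : ℂ | ∃ x ∈ Set.Icc (e1 - s/4) (e1 + s/4),
    ∃ y ∈ Set.Icc (-(Real.sin ν / 2 * s)) (Real.sin ν / 2 * s),
    ∃ u ∈ Set.Ici (0:ℝ),
      w = (x : ℂ) + (y : ℂ) * Complex.I - (u : ℂ) * Complex.exp (-Complex.I * ν)}

set_option maxHeartbeats 1000000 in
/-- Inequality (neri.5). -/
theorem neri5
    (ν : ℝ) (hν0 : 0 < ν) (hν : ν ≤ 1/120)
    (s : ℝ) (hs : 0 < s) (e1 : ℝ)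
    (z : ℂ) (hz : z ∈ regionE ν s e1) (hz1 : z ≠ (e1 : ℂ))
    (r : ℝ) (hr : r = 0 ∨ s ≤ r) :
    Real.sin ν * ‖z - e1‖
      ≤ ‖z - (r : ℂ) * Complex.exp (-Complex.I * ν) - e1‖ := by
  have hνπ : ν ≤ Real.pi := by
    have := Real.pi_gt_three; linarith
  have hsn0 : 0 ≤ Real.sin ν := Real.sin_nonneg_of_nonneg_of_le_pi hν0.le hνπ
  have hsn1 : Real.sin ν ≤ 1 := Real.sin_le_one ν
  have hsnν : Real.sin ν ≤ ν := (Real.sin_lt hν0).le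
  have hc0 : 0 ≤ Real.cos ν :=
    Real.cos_nonneg_of_mem_Icc ⟨by linarith, by linarith [Real.pi_gt_three]⟩
  have hc1 : Real.cos ν ≤ 1 := Real.cos_le_one ν
  have hsc : Real.sin ν ^ 2 + Real.cos ν ^ 2 = 1 := Real.sin_sq_add_cos_sq ν
  rcases hr with hr | hr
  · subst hr
    simp only [Complex.ofReal_zero, zero_mul, sub_zero]
    calc Real.sin ν * ‖z - e1‖ ≤ 1 * ‖z - e1‖ :=
          mul_le_mul_of_nonneg_right hsn1 (norm_nonneg _)
      _ = _ := one_mul _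
  · obtain ⟨x, hx, y, hy, u, hu, hzz⟩ := hz
    simp only [Set.mem_Icc, Set.mem_Ici] at hx hy hu
    have hE : Complex.exp (-Complex.I * ν) =
        (Real.cos ν : ℂ) - (Real.sin ν : ℂ) * Complex.I := by
      rw [show (-Complex.I * ν : ℂ) = ((-ν : ℝ) : ℂ) * Complex.I by push_cast; ring,
        Complex.exp_mul_I, ← Complex.ofReal_cos, ← Complex.ofReal_sin,
        Real.cos_neg, Real.sin_neg]
      push_cast; ring
    have h1 : z - e1 = ((x - e1 - u * Real.cos ν : ℝ) : ℂ)
        + ((y + u * Real.sin ν : ℝ) : ℂ) * Complex.I := by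
      rw [hzz, hE]; push_cast; ring
    have h2 : z - (r : ℂ) * Complex.exp (-Complex.I * ν) - e1 =
        ((x - e1 - (u + r) * Real.cos ν : ℝ) : ℂ)
        + ((y + (u + r) * Real.sin ν : ℝ) : ℂ) * Complex.I := by
      rw [hzz, hE]; push_cast; ring
    rw [h1, h2, Complex.norm_add_mul_I, Complex.norm_add_mul_I]
    rw [show Real.sin ν * Real.sqrt ((x - e1 - u * Real.cos ν) ^ 2 + (y + u * Real.sin ν) ^ 2)
        = Real.sqrt (Real.sin ν ^ 2 *
            ((x - e1 - u * Real.cos ν) ^ 2 + (y + u * Real.sin ν) ^ 2)) by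
      rw [Real.sqrt_mul (sq_nonneg _), Real.sqrt_sq hsn0]]
    apply Real.sqrt_le_sqrt
    -- rotated coordinates
    have e1' : (x - e1 - u * Real.cos ν) ^ 2 + (y + u * Real.sin ν) ^ 2
        = ((x - e1) * Real.cos ν - y * Real.sin ν - u) ^ 2
          + ((x - e1) * Real.sin ν + y * Real.cos ν) ^ 2 := by
      linear_combination (u ^ 2 - (x - e1) ^ 2 - y ^ 2) * hsc
    have e2' : (x - e1 - (u + r) * Real.cos ν) ^ 2 + (y + (u + r) * Real.sin ν) ^ 2
        = ((x - e1) * Real.cos ν - y * Real.sin ν - (u + r)) ^ 2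
          + ((x - e1) * Real.sin ν + y * Real.cos ν) ^ 2 := by
      linear_combination ((u + r) ^ 2 - (x - e1) ^ 2 - y ^ 2) * hsc
    rw [e1', e2']
    set A := (x - e1) * Real.cos ν - y * Real.sin ν with hA
    set B := (x - e1) * Real.sin ν + y * Real.cos ν with hB
    have h2a : 2 * A ≤ r := by
      rw [hA]
      nlinarith [mul_nonneg (show (0:ℝ) ≤ s/4 - (x - e1) by linarith [hx.2]) hc0,
        mul_nonneg (show (0:ℝ) ≤ y + Real.sin ν / 2 * s by linarith [hy.1]) hsn0,
        mul_nonneg hs.le (show (0:ℝ) ≤ 1 - Real.cos ν by linarith),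
        mul_nonneg (mul_nonneg (show (0:ℝ) ≤ 1/120 - Real.sin ν by linarith) hsn0) hs.le,
        mul_nonneg (mul_nonneg (show (0:ℝ) ≤ 1 - Real.sin ν by linarith) hsn0) hs.le]
    have hsq : (A - u) ^ 2 ≤ (u + r - A) ^ 2 :=
      sq_le_sq' (by linarith) (by linarith)
    have hkey : Real.sin ν ^ 2 * (A - u) ^ 2 ≤ (A - (u + r)) ^ 2 := by
      nlinarith [hsq, mul_nonneg (show (0:ℝ) ≤ 1 - Real.sin ν ^ 2 by nlinarith)
        (sq_nonneg (A - u))]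
    nlinarith [hkey, mul_nonneg (show (0:ℝ) ≤ 1 - Real.sin ν ^ 2 by nlinarith) (sq_nonneg B)]
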